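/- Let k ≥ 1 be an integer. There exist a positive integer W(k) and a threshold N_0 such that every integer N ≥ N_0 that is a multiple of E_k = gcd(2^k − 1, k) can be written as the sum of at most W(k) binary k'th powers (elements of S_k). -/

import Mathlib

set_option maxHeartbeats 1000000


/-- `ck k n = 1 + 2^n + 2^(2n) + ⋯ + 2^((k-1)n)`. -/
def ck (k n : ℕ) : ℕ := ∑ i ∈ Finset.range k, 2 ^ (i * n)

/-- `m` is a binary `k`'th power: `m = a * ck k n` for some `n ≥ 1` and `2^(n-1) ≤ a < 2^n`. -/
def IsBinaryKthPower (k m : ℕ) : Prop :=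
  ∃ n a : ℕ, 1 ≤ n ∧ 2 ^ (n - 1) ≤ a ∧ a < 2 ^ n ∧ m = a * ck k n

lemma ck_pos (k n : ℕ) (hk : 1 ≤ k) : 0 < ck k n := by
  unfold ck
  exact Finset.sum_pos (fun i _ => Nat.pow_pos (by norm_num)) (Finset.nonempty_range_iff.2 (by omega))

lemma ck_ge (k n : ℕ) (hk : 1 ≤ k) : 2 ^ ((k-1)*n) ≤ ck k n := by
  unfold ck
  exact Finset.single_le_sum (f := fun i => 2^(i*n)) (fun i _ => Nat.zero_le _)
    (Finset.mem_range.2 (by omega))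

lemma ck_le (k n : ℕ) : ck k n ≤ k * 2 ^ ((k-1)*n) := by
  unfold ck
  calc ∑ i ∈ Finset.range k, 2 ^ (i * n) ≤ ∑ _i ∈ Finset.range k, 2 ^ ((k-1)*n) := by
        apply Finset.sum_le_sum
        intro i hi
        exact Nat.pow_le_pow_right (by norm_num) (Nat.mul_le_mul_right n (by
          have := Finset.mem_range.1 hi; omega))
    _ = k * 2 ^ ((k-1)*n) := by simp [Finset.sum_const, Finset.card_range]

lemma ck_cast (k n : ℕ) : ((ck k n : ℤ)) = ∑ i ∈ Finset.range k, (2:ℤ) ^ (i * n) := by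
  unfold ck; push_cast; rfl

lemma geom_ck (k n : ℕ) : (ck k n : ℤ) * (2^n - 1) = 2^(k*n) - 1 := by
  have := geom_sum_mul ((2:ℤ)^n) k
  rw [ck_cast]
  calc (∑ i ∈ Finset.range k, (2:ℤ) ^ (i * n)) * (2^n - 1)
      = (∑ i ∈ Finset.range k, ((2:ℤ)^n) ^ i) * (2^n - 1) := by
        congr 1; apply Finset.sum_congr rfl; intro i _; rw [← pow_mul, Nat.mul_comm]
    _ = ((2:ℤ)^n)^k - 1 := this
    _ = 2^(k*n) - 1 := by rw [← pow_mul, Nat.mul_comm]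

/-- key: if k ∣ n then gcd (ck k n) (ck k (n+1)) divides gcd (2^k-1) k -/
lemma gcd_ck_dvd (k n : ℕ) (hk : 1 ≤ k) (hn : 1 ≤ n) (hdvd : k ∣ n) :
    Nat.gcd (ck k n) (ck k (n+1)) ∣ Nat.gcd (2^k - 1) k := by
  set g : ℕ := Nat.gcd (ck k n) (ck k (n+1)) with hg
  have h1 : (g:ℤ) ∣ (ck k n : ℤ) := Int.natCast_dvd_natCast.2 (Nat.gcd_dvd_left _ _)
  have h2 : (g:ℤ) ∣ (ck k (n+1) : ℤ) := Int.natCast_dvd_natCast.2 (Nat.gcd_dvd_right _ _)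
  have hd1 : (g:ℤ) ∣ 2^(k*n) - 1 := by
    have := geom_ck k n
    exact this ▸ Dvd.dvd.mul_right h1 _
  have hd2 : (g:ℤ) ∣ 2^(k*(n+1)) - 1 := by
    have := geom_ck k (n+1)
    exact this ▸ Dvd.dvd.mul_right h2 _
  -- g ∣ 2^k - 1
  have hk1 : (g:ℤ) ∣ 2^k - 1 := by
    have e1 : (g:ℤ) ∣ 2^k * (2^(k*n) - 1) := Dvd.dvd.mul_left hd1 _
    have e2 : (2:ℤ)^(k*(n+1)) - 1 - 2^k * (2^(k*n) - 1) = 2^k - 1 := by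
      rw [Nat.mul_add, pow_add]; ring
    calc (g:ℤ) ∣ (2^(k*(n+1)) - 1) - 2^k * (2^(k*n) - 1) := dvd_sub hd2 e1
      _ = 2^k - 1 := e2
  -- g ∣ 2^n - 1
  obtain ⟨t, rfl⟩ := hdvd
  have hn1 : (g:ℤ) ∣ 2^(k*t) - 1 := by
    have : ((2:ℤ)^k - 1) ∣ (2^k)^t - 1 := by
      simpa using sub_dvd_pow_sub_pow ((2:ℤ)^k) 1 t
    rw [← pow_mul] at this
    exact hk1.trans this
  -- g ∣ ck k n - k
  have hck : (g:ℤ) ∣ (ck k (k*t) : ℤ) - k := by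
    have : (ck k (k*t) : ℤ) - k = ∑ i ∈ Finset.range k, ((2^(k*t))^i - 1) := by
      rw [ck_cast, Finset.sum_sub_distrib]
      congr 1
      · apply Finset.sum_congr rfl; intro i _; rw [mul_comm i (k*t), pow_mul]
      · simp
    rw [this]
    apply Finset.dvd_sum
    intro i _
    have : ((2:ℤ)^(k*t) - 1) ∣ (2^(k*t))^i - 1 := by simpa using sub_dvd_pow_sub_pow ((2:ℤ)^(k*t)) 1 i
    exact hn1.trans this
  have hkk : (g:ℤ) ∣ (k:ℤ) := by
    have := dvd_sub h1 hck
    simpa using this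
  -- convert
  have hknat : g ∣ k := Int.ofNat_dvd.1 (by simpa using hkk)
  have h2k : g ∣ 2^k - 1 := by
    have : ((2^k - 1 : ℕ) : ℤ) = 2^k - 1 := by
      push_cast [Nat.one_le_two_pow]; ring
    exact Int.ofNat_dvd.1 (by rw [this]; exact hk1)
  exact Nat.dvd_gcd h2k hknat


/-- Every `x ≥ 2^s` is a sum of numbers in `[2^(s-1), 2^s)`, using at most `x / 2^(s-1)` of them. -/
lemma multiset_repr (s : ℕ) (hs : 1 ≤ s) : ∀ x : ℕ, 2^s ≤ x →
    ∃ l : Multiset ℕ, (∀ a ∈ l, 2^(s-1) ≤ a ∧ a < 2^s) ∧ l.sum = x ∧ l.card * 2^(s-1) ≤ x := by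
  intro x
  induction x using Nat.strong_induction_on with
  | _ x ih =>
    intro hx
    have hs2 : 2^s = 2 * 2^(s-1) := by
      rw [← pow_succ']; congr 1; omega
    have hp : 0 < 2^(s-1) := Nat.pow_pos (by norm_num)
    by_cases h1 : x < 2^s + 2^(s-1)
    · -- two elements: 2^(s-1) and x - 2^(s-1)
      refine ⟨{2^(s-1), x - 2^(s-1)}, ?_, ?_, ?_⟩
      · intro a ha
        simp only [Multiset.insert_eq_cons, Multiset.mem_cons, Multiset.mem_singleton] at ha
        rcases ha with rfl | rfl
        · constructor; rfl; omega
        · omega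
      · simp; omega
      · simp; omega
    · by_cases h2 : x ≤ 2^(s+1) - 2
      · -- two elements: x - (2^s - 1) and 2^s - 1
        refine ⟨{x - (2^s - 1), 2^s - 1}, ?_, ?_, ?_⟩
        · intro a ha
          simp only [Multiset.insert_eq_cons, Multiset.mem_cons, Multiset.mem_singleton] at ha
          have : 2^(s+1) = 2 * 2^s := by rw [pow_succ']
          rcases ha with rfl | rfl <;> omega
        · simp; omega
        · simp; omega
      · -- recurse on x - (2^s - 1)
        have hlt : x - (2^s - 1) < x := by omega
        have hge : 2^s ≤ x - (2^s - 1) := by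
          have : 2^(s+1) = 2 * 2^s := by rw [pow_succ']
          omega
        obtain ⟨l, hmem, hsum, hcard⟩ := ih _ hlt hge
        refine ⟨(2^s - 1) ::ₘ l, ?_, ?_, ?_⟩
        · intro a ha
          rcases Multiset.mem_cons.1 ha with rfl | ha
          · omega
          · exact hmem a ha
        · simp [hsum]; omega
        · simp only [Multiset.card_cons]
          have : (l.card + 1) * 2^(s-1) = l.card * 2^(s-1) + 2^(s-1) := by ring
          omega


lemma exists_digits : ∀ (k : ℕ), 1 ≤ k → ∀ (M Q : ℤ), 2 ≤ M →
    ∃ z : Fin k → ℤ, (∑ i : Fin k, z i * M^(i:ℕ)) = Q ∧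
      ∀ i, |z i| * M^(k-1) ≤ k * M^k + |Q| := by
  intro k
  induction k with
  | zero => omega
  | succ k ih =>
    intro _ M Q hM
    by_cases hk : 1 ≤ k
    · obtain ⟨z', hz'sum, hz'bd⟩ := ih hk M (Q / M) hM
      refine ⟨Fin.cons (Q % M) z', ?_, ?_⟩
      · rw [Fin.sum_univ_succ]
        simp only [Fin.cons_zero, Fin.cons_succ, pow_zero, mul_one]
        have : ∑ i : Fin k, z' i * M ^ ((i.succ : Fin (k+1)) : ℕ) = M * ∑ i : Fin k, z' i * M ^ (i:ℕ) := by
          rw [Finset.mul_sum]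
          apply Finset.sum_congr rfl
          intro i _
          have : ((i.succ : Fin (k+1)) : ℕ) = (i:ℕ) + 1 := rfl
          rw [this, pow_succ]; ring
        rw [this, hz'sum]
        simp only [Fin.val_zero, pow_zero, mul_one]
        exact Int.emod_add_mul_ediv Q M
      · intro i
        have hMpos : (0:ℤ) < M := by omega
        have hQmod : 0 ≤ Q % M ∧ Q % M < M := ⟨Int.emod_nonneg Q (by omega), Int.emod_lt_of_pos Q hMpos⟩
        have hMk : (0:ℤ) < M^k := pow_pos hMpos k
        refine Fin.cases ?_ ?_ i
        · simp only [Fin.cons_zero]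
          have h1 : |Q % M| ≤ M := by rw [abs_of_nonneg hQmod.1]; omega
          have : |Q % M| * M^((k+1)-1) ≤ M * M^k := by
            have : (k+1)-1 = k := rfl
            rw [this]
            exact mul_le_mul_of_nonneg_right h1 (le_of_lt hMk)
          calc |Q % M| * M^((k+1)-1) ≤ M * M^k := this
            _ = M^(k+1) := by rw [pow_succ]; ring
            _ ≤ (k+1) * M^(k+1) + |Q| := by
                have hc : (0:ℤ) ≤ k := Int.natCast_nonneg k
                have h2 : (0:ℤ) < M^(k+1) := pow_pos hMpos _
                have := abs_nonneg Q
                push_cast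
                nlinarith
        · intro j
          simp only [Fin.cons_succ]
          have hbd := hz'bd j
          -- |z' j| * M^(k-1) ≤ k * M^k + |Q/M|
          -- multiply by M : |z' j| * M^k ≤ k*M^(k+1) + M*|Q/M|
          have hstep : |z' j| * M^((k+1)-1) ≤ k * M^(k+1) + M * |Q / M| := by
            have : (k+1)-1 = k := rfl
            rw [this]
            have hk1 : k - 1 + 1 = k := by omega
            have : |z' j| * M^k = (|z' j| * M^(k-1)) * M := by
              rw [mul_assoc, ← pow_succ, hk1]
            rw [this]
            calc (|z' j| * M^(k-1)) * M ≤ (k * M^k + |Q/M|) * M :=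
                  mul_le_mul_of_nonneg_right hbd (by omega)
              _ = k * M^(k+1) + M * |Q/M| := by ring
          have hdivbd : M * |Q / M| ≤ |Q| + M := by
            have := Int.emod_add_mul_ediv Q M
            have h1 : M * (Q / M) = Q - Q % M := by omega
            rw [show M * |Q / M| = |M * (Q/M)| by rw [abs_mul, abs_of_pos hMpos], h1]
            calc |Q - Q % M| ≤ |Q| + |Q % M| := abs_sub _ _
              _ ≤ |Q| + M := by rw [abs_of_nonneg hQmod.1]; omega
          calc |z' j| * M^((k+1)-1) ≤ k * M^(k+1) + (|Q| + M) := by omega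
            _ ≤ (k+1) * M^(k+1) + |Q| := by
                have : M ≤ M^(k+1) := le_self_pow₀ (by omega) (by omega)
                nlinarith
    · -- k = 0, so k+1 = 1
      have hk0 : k = 0 := by omega
      subst hk0
      refine ⟨fun _ => Q, ?_, ?_⟩
      · simp
      · intro i
        simp only [pow_zero, mul_one]
        have h1 : (0:ℤ) < M^(0+1) := by positivity
        have h2 : ((0:ℕ)+1 : ℤ) = 1 := by norm_num
        push_cast
        nlinarith [abs_nonneg Q]



noncomputable def Vmat (k : ℕ) : Matrix (Fin k) (Fin k) ℤ :=
  Matrix.vandermonde (fun i : Fin k => (2:ℤ)^(i:ℕ))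

lemma Vmat_apply (k : ℕ) (i j : Fin k) : Vmat k i j = 2^((i:ℕ)*(j:ℕ)) := by
  simp [Vmat, Matrix.vandermonde, ← pow_mul]

lemma Vdet_pos (k : ℕ) : 0 < (Vmat k).det := by
  rw [Vmat, Matrix.det_vandermonde]
  apply Finset.prod_pos
  intro i _
  apply Finset.prod_pos
  intro j hj
  have hij : (i:ℕ) < (j:ℕ) := Fin.lt_iff_val_lt_val.1 (Finset.mem_Ioi.1 hj)
  have : (2:ℤ)^(i:ℕ) < 2^(j:ℕ) := pow_lt_pow_right₀ (by norm_num) hij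
  omega

lemma ck_as_sum (k n : ℕ) (j : Fin k) :
    ((ck k (n + j) : ℤ)) = ∑ i : Fin k, (2:ℤ)^((i:ℕ)*n) * Vmat k i j := by
  rw [ck_cast, ← Fin.sum_univ_eq_sum_range (fun i => (2:ℤ)^(i * (n + (j:ℕ))))]
  apply Finset.sum_congr rfl
  intro i _
  rw [Vmat_apply, ← pow_add, Nat.mul_add]

lemma vander_value (k n : ℕ) (z : Fin k → ℤ) :
    ∑ j : Fin k, ((Vmat k).adjugate.mulVec z) j * (ck k (n + j) : ℤ)
      = (Vmat k).det * ∑ i : Fin k, z i * 2^((i:ℕ)*n) := by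
  have key : (Vmat k).mulVec ((Vmat k).adjugate.mulVec z) = (Vmat k).det • z := by
    rw [Matrix.mulVec_mulVec, Matrix.mul_adjugate, Matrix.smul_mulVec, Matrix.one_mulVec]
  calc ∑ j : Fin k, ((Vmat k).adjugate.mulVec z) j * (ck k (n + j) : ℤ)
      = ∑ j : Fin k, ((Vmat k).adjugate.mulVec z) j * ∑ i : Fin k, (2:ℤ)^((i:ℕ)*n) * Vmat k i j := by
        apply Finset.sum_congr rfl; intro j _; rw [ck_as_sum k n j]
    _ = ∑ i : Fin k, (2:ℤ)^((i:ℕ)*n) * ∑ j : Fin k, Vmat k i j * ((Vmat k).adjugate.mulVec z) j := by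
        simp only [Finset.mul_sum]
        rw [Finset.sum_comm]
        apply Finset.sum_congr rfl; intro i _
        apply Finset.sum_congr rfl; intro j _
        ring
    _ = ∑ i : Fin k, (2:ℤ)^((i:ℕ)*n) * ((Vmat k).det • z) i := by
        apply Finset.sum_congr rfl; intro i _
        congr 1
        rw [← key]
        rfl
    _ = (Vmat k).det * ∑ i : Fin k, z i * 2^((i:ℕ)*n) := by
        rw [Finset.mul_sum]
        apply Finset.sum_congr rfl; intro i _
        simp [smul_eq_mul]; ring

noncomputable def Badj (k : ℕ) : ℤ := ∑ j : Fin k, ∑ l : Fin k, |(Vmat k).adjugate j l|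

lemma Badj_nonneg (k : ℕ) : 0 ≤ Badj k :=
  Finset.sum_nonneg fun j _ => Finset.sum_nonneg fun l _ => abs_nonneg _

lemma adj_mulVec_bound (k : ℕ) (z : Fin k → ℤ) (Z : ℤ) (hZ : 0 ≤ Z)
    (hz : ∀ l, |z l| ≤ Z) (j : Fin k) :
    |((Vmat k).adjugate.mulVec z) j| ≤ Badj k * Z := by
  have h1 : |((Vmat k).adjugate.mulVec z) j| ≤ ∑ l : Fin k, |(Vmat k).adjugate j l| * |z l| := by
    calc |((Vmat k).adjugate.mulVec z) j| = |∑ l : Fin k, (Vmat k).adjugate j l * z l| := rfl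
      _ ≤ ∑ l : Fin k, |(Vmat k).adjugate j l * z l| := Finset.abs_sum_le_sum_abs _ _
      _ = ∑ l : Fin k, |(Vmat k).adjugate j l| * |z l| := by
          apply Finset.sum_congr rfl; intro l _; rw [abs_mul]
  calc |((Vmat k).adjugate.mulVec z) j| ≤ ∑ l : Fin k, |(Vmat k).adjugate j l| * |z l| := h1
    _ ≤ ∑ l : Fin k, |(Vmat k).adjugate j l| * Z := by
        apply Finset.sum_le_sum; intro l _
        exact mul_le_mul_of_nonneg_left (hz l) (abs_nonneg _)
    _ = (∑ l : Fin k, |(Vmat k).adjugate j l|) * Z := by rw [Finset.sum_mul]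
    _ ≤ Badj k * Z := by
        apply mul_le_mul_of_nonneg_right _ hZ
        apply Finset.single_le_sum (f := fun j => ∑ l : Fin k, |(Vmat k).adjugate j l|)
          (fun j _ => Finset.sum_nonneg fun l _ => abs_nonneg _) (Finset.mem_univ j)


noncomputable def Dn (k : ℕ) : ℕ := ((Vmat k).det).toNat
noncomputable def Bn (k : ℕ) : ℕ := (Badj k).toNat
def GU (k : ℕ) : ℕ := k*k*k*2^(k*k)
noncomputable def QU (k : ℕ) : ℕ := GU k + 2*(Dn k)*k*2^(k*k)
noncomputable def ZU (k : ℕ) : ℕ := k + QU k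
noncomputable def DU (k : ℕ) : ℕ := Bn k * ZU k + Dn k
noncomputable def beta (k : ℕ) : ℕ := GU k * (2^k + DU k + 1)
noncomputable def CU (k : ℕ) : ℕ := 2^(k*k) * beta k
noncomputable def TU (k : ℕ) : ℕ := k * CU k + DU k

lemma Dn_cast (k : ℕ) : ((Dn k : ℤ)) = (Vmat k).det :=
  Int.toNat_of_nonneg (le_of_lt (Vdet_pos k))
lemma Dn_pos (k : ℕ) : 1 ≤ Dn k := by
  have := Vdet_pos k; have := Dn_cast k; omega
lemma Bn_cast (k : ℕ) : ((Bn k : ℤ)) = Badj k :=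
  Int.toNat_of_nonneg (Badj_nonneg k)

lemma single_mul_sum (k : ℕ) (i : Fin k) (c : ℤ) (f : Fin k → ℤ) :
    ∑ j : Fin k, (Pi.single i c : Fin k → ℤ) j * f j = c * f i := by
  rw [Finset.sum_eq_single i]
  · rw [Pi.single_eq_same]
  · intro b _ hb; rw [Pi.single_eq_of_ne hb]; ring
  · intro h; exact absurd (Finset.mem_univ i) h

lemma main_repr (k' m : ℕ) (hm : 1 ≤ m) : ∀ N : ℕ,
    Nat.gcd (2^(k'+2) - 1) (k'+2) ∣ N →
    beta (k'+2) * 2^((k'+2)*(k'+2)*m) ≤ N →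
    N < beta (k'+2) * 2^((k'+2)*(k'+2)) * 2^((k'+2)*(k'+2)*m) →
    ∃ A : Fin (k'+2) → ℕ,
      (∀ j : Fin (k'+2), 2^((k'+2)*m + (j:ℕ)) ≤ A j ∧ A j ≤ TU (k'+2) * 2^((k'+2)*m)) ∧
      ∑ j : Fin (k'+2), A j * ck (k'+2) ((k'+2)*m + (j:ℕ)) = N := by
  intro N hE hlow hhigh
  set k := k' + 2 with hkdef
  have hk2 : 2 ≤ k := by omega
  have hk1 : 1 ≤ k := by omega
  set n := k * m with hndef
  have hn1 : 1 ≤ n := by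
    have : 2 * 1 ≤ k * m := Nat.mul_le_mul hk2 hm
    omega
  have hkn : k ≤ n := by
    have : k * 1 ≤ k * m := Nat.mul_le_mul_left k hm
    omega
  set P : ℕ := 2 ^ n with hPdef
  have hP2 : 2 ≤ P := by
    have : 2 ^ 1 ≤ 2 ^ n := Nat.pow_le_pow_right (by norm_num) hn1
    simpa [hPdef] using this
  have hP1 : 1 ≤ P := by omega
  have hPk : P ^ k = 2 ^ (k*k*m) := by
    rw [hPdef, ← pow_mul]
    congr 1
    ring
  have hPk1 : P * 2^((k-1)*n) = P^k := by
    rw [hPdef, ← pow_add, ← pow_mul]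
    congr 1
    have : k - 1 + 1 = k := by omega
    calc n + (k-1)*n = (k-1+1) * n := by ring
      _ = n * k := by rw [this]; ring
  set E := Nat.gcd (2^k - 1) k with hEdef
  set g2 := Nat.gcd (ck k n) (ck k (n+1)) with hg2def
  have hg2E : g2 ∣ E := gcd_ck_dvd k n hk1 hn1 ⟨m, rfl⟩
  have hEpos : 0 < E := Nat.gcd_pos_of_pos_right _ (by omega)
  have hE_le : E ≤ k := Nat.le_of_dvd (by omega) (Nat.gcd_dvd_right _ _)
  have hg2_pos : 1 ≤ g2 := Nat.gcd_pos_of_pos_left _ (ck_pos k n hk1)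
  have hg2_le : g2 ≤ k := le_trans (Nat.le_of_dvd hEpos hg2E) hE_le
  -- the weight vector and G
  set cv : Fin k → ℕ := fun j => if (j:ℕ) < 2 then 1 else g2 with hcvdef
  have hcv : ∀ j : Fin k, 1 ≤ cv j ∧ cv j ≤ k := by
    intro j
    by_cases h : (j:ℕ) < 2 <;> simp only [hcvdef, h, ↓reduceIte] <;> omega
  set G := ∑ j : Fin k, cv j * ck k (n + (j:ℕ)) with hGdef
  have hckub : ∀ j : Fin k, ck k (n + (j:ℕ)) ≤ k * 2^(k*k) * 2^((k-1)*n) := by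
    intro j
    calc ck k (n + (j:ℕ)) ≤ k * 2 ^ ((k-1)*(n + (j:ℕ))) := ck_le k _
      _ ≤ k * 2 ^ ((k-1)*n + k*k) := by
          apply Nat.mul_le_mul_left
          apply Nat.pow_le_pow_right (by norm_num)
          have h1 : (k-1) * (j:ℕ) ≤ k * k := by
            have := j.isLt
            exact Nat.mul_le_mul (by omega) (by omega)
          calc (k-1)*(n + (j:ℕ)) = (k-1)*n + (k-1)*(j:ℕ) := by ring
            _ ≤ (k-1)*n + k*k := by omega
      _ = k * 2^(k*k) * 2^((k-1)*n) := by rw [pow_add]; ring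
  have hGub : G ≤ GU k * 2^((k-1)*n) := by
    rw [hGdef]
    calc ∑ j : Fin k, cv j * ck k (n + (j:ℕ))
        ≤ ∑ _j : Fin k, k * (k * 2^(k*k) * 2^((k-1)*n)) := by
          apply Finset.sum_le_sum
          intro j _
          exact Nat.mul_le_mul (hcv j).2 (hckub j)
      _ = k * (k * (k * 2^(k*k) * 2^((k-1)*n))) := by
          rw [Finset.sum_const, Finset.card_univ, Fintype.card_fin, smul_eq_mul]
      _ = GU k * 2^((k-1)*n) := by unfold GU; ring
  have hGlb : 2^((k-1)*n) ≤ G := by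
    rw [hGdef]
    calc 2^((k-1)*n) ≤ ck k n := ck_ge k n hk1
      _ = cv ⟨0, by omega⟩ * ck k (n + ((⟨0, by omega⟩ : Fin k) :ℕ)) := by
          simp [hcvdef]
      _ ≤ G := by
          rw [hGdef]
          exact Finset.single_le_sum (f := fun j : Fin k => cv j * ck k (n + (j:ℕ)))
            (fun j _ => Nat.zero_le _) (Finset.mem_univ _)
  have hGpos : 0 < G := lt_of_lt_of_le (Nat.pow_pos (by norm_num)) hGlb
  have hg2G : g2 ∣ G := by
    rw [hGdef]
    apply Finset.dvd_sum
    intro j _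
    by_cases h : (j:ℕ) < 2
    · have hcvj : cv j = 1 := by simp only [hcvdef, h, ↓reduceIte]
      rw [hcvj, one_mul]
      rcases (by omega : (j:ℕ) = 0 ∨ (j:ℕ) = 1) with h2 | h2 <;> rw [h2]
      · simpa using Nat.gcd_dvd_left (ck k n) (ck k (n+1))
      · exact Nat.gcd_dvd_right (ck k n) (ck k (n+1))
    · have hcvj : cv j = g2 := by simp only [hcvdef, h, ↓reduceIte]
      rw [hcvj]
      exact Dvd.dvd.mul_right (dvd_refl g2) _
  -- C and R
  set C := N / (P * G) with hCdef
  set R := N % (P * G) with hRdef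
  have hNdec : P * G * C + R = N := Nat.div_add_mod N (P * G)
  have hRub : R < P * G := Nat.mod_lt _ (by positivity)
  have hPG_ub : P * G ≤ GU k * P^k := by
    calc P * G ≤ P * (GU k * 2^((k-1)*n)) := Nat.mul_le_mul_left P hGub
      _ = GU k * (P * 2^((k-1)*n)) := by ring
      _ = GU k * P^k := by rw [hPk1]
  have hPG_lb : P^k ≤ P * G := by
    calc P^k = P * 2^((k-1)*n) := hPk1.symm
      _ ≤ P * G := Nat.mul_le_mul_left P hGlb
  have hClb : 2^k + DU k + 1 ≤ C := by
    by_contra hcon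
    push_neg at hcon
    have h1 : N < (2^k + DU k + 1) * (P * G) := by
      calc N = P * G * C + R := hNdec.symm
        _ < P * G * C + P * G := by omega
        _ = (C + 1) * (P * G) := by ring
        _ ≤ (2^k + DU k + 1) * (P * G) := Nat.mul_le_mul_right _ (by omega)
    have h2 : beta k * 2^(k*k*m) ≤ N := hlow
    rw [← hPk] at h2
    have h5 : (2^k + DU k + 1) * (P * G) ≤ N := by
      calc (2^k + DU k + 1) * (P * G) ≤ (2^k + DU k + 1) * (GU k * P^k) :=
            Nat.mul_le_mul_left _ hPG_ub
        _ = beta k * P^k := by unfold beta; ring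
        _ ≤ N := h2
    exact absurd h1 (not_lt.2 h5)
  have hCub : C ≤ CU k := by
    have h1 : C * P^k ≤ N := by
      calc C * P^k ≤ C * (P * G) := Nat.mul_le_mul_left C hPG_lb
        _ = P * G * C := by ring
        _ ≤ N := by omega
    have h2 : N < CU k * P^k := by
      rw [← hPk] at hhigh
      calc N < beta k * 2^(k*k) * P^k := hhigh
        _ = CU k * P^k := by unfold CU; ring
    by_contra hcon
    push_neg at hcon
    have h3 : CU k * P^k ≤ C * P^k := Nat.mul_le_mul_right _ (by omega)
    exact absurd (lt_of_le_of_lt (le_trans h3 h1) h2) (not_lt.2 (le_refl _))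
  have hg2R : g2 ∣ R := by
    have h1 : g2 ∣ N := dvd_trans hg2E hE
    have h2 : g2 ∣ P * G := Dvd.dvd.mul_left hg2G P
    exact (Nat.dvd_mod_iff h2).2 h1
  -- integer phase
  set D : ℤ := (Dn k : ℤ) with hDdef
  have hD1 : 1 ≤ D := by
    have := Dn_pos k
    rw [hDdef]
    exact_mod_cast this
  set a : ℤ := (ck k n : ℤ) with hadef
  set b : ℤ := (ck k (n+1) : ℤ) with hbdef
  obtain ⟨R', hR'⟩ := hg2R
  have hgcdab : (g2 : ℤ) = a * Int.gcdA a b + b * Int.gcdB a b := by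
    have h1 := Int.gcd_eq_gcd_ab a b
    have h2 : Int.gcd a b = g2 := by
      rw [hadef, hbdef, Int.gcd_natCast_natCast]
    rw [← h2]
    exact_mod_cast h1
  have hbez : (R:ℤ) = a * (Int.gcdA a b * R') + b * (Int.gcdB a b * R') := by
    have : (R:ℤ) = (g2:ℤ) * R' := by exact_mod_cast hR'
    rw [this, hgcdab]
    ring
  set y0 := (Int.gcdA a b * R') % D with hy0def
  set y1 := (Int.gcdB a b * R') % D with hy1def
  have hDne : D ≠ 0 := by omega
  have hy0bd : 0 ≤ y0 ∧ y0 < D := ⟨Int.emod_nonneg _ hDne, Int.emod_lt_of_pos _ (by omega)⟩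
  have hy1bd : 0 ≤ y1 ∧ y1 < D := ⟨Int.emod_nonneg _ hDne, Int.emod_lt_of_pos _ (by omega)⟩
  have hQdvd : D ∣ ((R:ℤ) - y0*a - y1*b) := by
    have h0 : D ∣ (Int.gcdA a b * R' - y0) := Int.dvd_self_sub_of_emod_eq rfl
    have h1 : D ∣ (Int.gcdB a b * R' - y1) := Int.dvd_self_sub_of_emod_eq rfl
    have : (R:ℤ) - y0*a - y1*b
        = a * (Int.gcdA a b * R' - y0) + b * (Int.gcdB a b * R' - y1) := by
      rw [hbez]; ring
    rw [this]
    exact dvd_add (Dvd.dvd.mul_left h0 a) (Dvd.dvd.mul_left h1 b)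
  set Q := ((R:ℤ) - y0*a - y1*b) / D with hQdef
  have hQ : D * Q = (R:ℤ) - y0*a - y1*b := Int.mul_ediv_cancel' hQdvd
  set cb : ℕ := k * 2^(k*k) * 2^((k-1)*n) with hcbdef
  have hckubZ : a ≤ (cb:ℤ) ∧ b ≤ (cb:ℤ) := by
    constructor
    · rw [hadef]
      exact_mod_cast hckub ⟨0, by omega⟩
    · rw [hbdef]
      have := hckub ⟨1, by omega⟩
      exact_mod_cast this
  have ha0 : 0 ≤ a := Int.natCast_nonneg _
  have hb0 : 0 ≤ b := Int.natCast_nonneg _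
  have hQbd1 : |Q| ≤ (R:ℤ) + D * (cb:ℤ) * 2 := by
    have hR0 : (0:ℤ) ≤ (R:ℤ) := Int.natCast_nonneg _
    have h1 : |Q| ≤ |D * Q| := by
      rw [abs_mul]
      have h3 : 1 ≤ |D| := by rw [abs_of_pos (by omega : (0:ℤ) < D)]; omega
      exact le_mul_of_one_le_left (abs_nonneg Q) h3
    have h4 : y0 * a ≤ D * (cb:ℤ) := by
      calc y0 * a ≤ D * a := mul_le_mul_of_nonneg_right hy0bd.2.le ha0
        _ ≤ D * (cb:ℤ) := mul_le_mul_of_nonneg_left hckubZ.1 (by omega)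
    have h5 : y1 * b ≤ D * (cb:ℤ) := by
      calc y1 * b ≤ D * b := mul_le_mul_of_nonneg_right hy1bd.2.le hb0
        _ ≤ D * (cb:ℤ) := mul_le_mul_of_nonneg_left hckubZ.2 (by omega)
    have h6 : 0 ≤ y0 * a := mul_nonneg hy0bd.1 ha0
    have h7 : 0 ≤ y1 * b := mul_nonneg hy1bd.1 hb0
    have h8 : |D * Q| ≤ (R:ℤ) + D * (cb:ℤ) * 2 := by
      rw [hQ, abs_le]
      constructor <;> linarith
    linarith
  have hQbd : |Q| ≤ (QU k : ℤ) * (P:ℤ)^k := by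
    have hcbP : cb ≤ k * 2^(k*k) * P^k := by
      apply Nat.mul_le_mul_left
      rw [hPdef, ← pow_mul]
      apply Nat.pow_le_pow_right (by norm_num)
      exact Nat.mul_le_mul (by omega) (le_refl n) |>.trans (le_of_eq (Nat.mul_comm k n))
    have hnat : R + Dn k * cb * 2 ≤ QU k * P^k := by
      have hRle : R ≤ GU k * P^k := le_trans (le_of_lt hRub) hPG_ub
      have h2 : Dn k * cb * 2 ≤ 2 * Dn k * k * 2^(k*k) * P^k := by
        calc Dn k * cb * 2 ≤ Dn k * (k * 2^(k*k) * P^k) * 2 :=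
              Nat.mul_le_mul_right 2 (Nat.mul_le_mul_left _ hcbP)
          _ = 2 * Dn k * k * 2^(k*k) * P^k := by ring
      calc R + Dn k * cb * 2 ≤ GU k * P^k + 2 * Dn k * k * 2^(k*k) * P^k := by omega
        _ = QU k * P^k := by unfold QU; ring
    calc |Q| ≤ (R:ℤ) + D * (cb:ℤ) * 2 := hQbd1
      _ = ((R + Dn k * cb * 2 : ℕ) : ℤ) := by rw [hDdef]; push_cast; ring
      _ ≤ ((QU k * P^k : ℕ) : ℤ) := Nat.cast_le.2 hnat
      _ = (QU k : ℤ) * (P:ℤ)^k := by push_cast; ring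
  -- digits
  obtain ⟨z, hzsum, hzbd⟩ := exists_digits k hk1 (P:ℤ) Q (by exact_mod_cast hP2)
  have hPkk : (P:ℤ)^k = (P:ℤ) * (P:ℤ)^(k-1) := by
    have h : k - 1 + 1 = k := by omega
    calc (P:ℤ)^k = (P:ℤ)^(k-1+1) := by rw [h]
      _ = (P:ℤ) * (P:ℤ)^(k-1) := by rw [pow_succ]; ring
  have hzbd' : ∀ i, |z i| ≤ (ZU k : ℤ) * (P:ℤ) := by
    intro i
    have h1 := hzbd i
    have hZUc : (ZU k : ℤ) = (k:ℤ) + (QU k : ℤ) := by unfold ZU; push_cast; ring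
    have h2 : (k:ℤ) * (P:ℤ)^k + |Q| ≤ (ZU k:ℤ) * (P:ℤ) * (P:ℤ)^(k-1) := by
      have h3 : (QU k:ℤ) * (P:ℤ)^k ≤ (QU k:ℤ) * ((P:ℤ) * (P:ℤ)^(k-1)) := by
        rw [← hPkk]
      calc (k:ℤ) * (P:ℤ)^k + |Q| ≤ (k:ℤ) * (P:ℤ)^k + (QU k:ℤ) * (P:ℤ)^k := by linarith [hQbd]
        _ = ((k:ℤ) + (QU k:ℤ)) * ((P:ℤ) * (P:ℤ)^(k-1)) := by rw [← hPkk]; ring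
        _ = (ZU k:ℤ) * (P:ℤ) * (P:ℤ)^(k-1) := by rw [hZUc]; ring
    have h3 : (0:ℤ) < (P:ℤ)^(k-1) := by positivity
    exact le_of_mul_le_mul_right (le_trans h1 h2) h3
  -- w
  set w := (Vmat k).adjugate.mulVec z with hwdef
  have hwbd : ∀ j, |w j| ≤ (Bn k:ℤ) * ((ZU k:ℤ) * (P:ℤ)) := by
    intro j
    have := adj_mulVec_bound k z ((ZU k:ℤ)*(P:ℤ)) (by positivity) hzbd' j
    rw [← Bn_cast] at this
    exact this
  have hwval : ∑ j : Fin k, w j * (ck k (n + (j:ℕ)) : ℤ) = D * Q := by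
    rw [hwdef, vander_value k n z, hDdef, Dn_cast]
    congr 1
    rw [← hzsum]
    apply Finset.sum_congr rfl
    intro i _
    congr 1
    rw [hPdef]
    push_cast
    rw [← pow_mul, mul_comm n (i:ℕ)]
  -- yv
  have h01 : (0 : Fin k) ≠ (1 : Fin k) := by
    intro hcon
    have := congrArg Fin.val hcon
    simp [Fin.val_zero, Fin.val_one] at this; omega
  set yv : Fin k → ℤ := Pi.single (0 : Fin k) y0 + Pi.single (1 : Fin k) y1 with hyvdef
  have hyval : ∑ j : Fin k, yv j * (ck k (n + (j:ℕ)):ℤ) = y0 * a + y1 * b := by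
    rw [hyvdef]
    simp only [Pi.add_apply, add_mul]
    rw [Finset.sum_add_distrib, single_mul_sum, single_mul_sum]
    have h0 : ((0 : Fin k):ℕ) = 0 := rfl
    have h1 : ((1 : Fin k):ℕ) = 1 := rfl
    rw [h0, h1, hadef, hbdef]
    norm_num
  have hyvbd : ∀ j : Fin k, 0 ≤ yv j ∧ yv j ≤ D := by
    intro j
    rw [hyvdef]
    by_cases hj0 : j = 0
    · subst hj0
      rw [Pi.add_apply, Pi.single_eq_same, Pi.single_eq_of_ne h01]
      omega
    · by_cases hj1 : j = 1
      · subst hj1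
        rw [Pi.add_apply, Pi.single_eq_same, Pi.single_eq_of_ne (Ne.symm h01)]
        omega
      · rw [Pi.add_apply, Pi.single_eq_of_ne hj0, Pi.single_eq_of_ne hj1]
        omega
  -- δ
  set δ : Fin k → ℤ := fun j => yv j + w j with hδdef
  have hδval : ∑ j : Fin k, δ j * (ck k (n + (j:ℕ)):ℤ) = (R:ℤ) := by
    simp only [hδdef, add_mul]
    rw [Finset.sum_add_distrib, hyval, hwval]
    rw [hQ]
    ring
  have hδbd : ∀ j, |δ j| ≤ (DU k : ℤ) * (P:ℤ) := by
    intro j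
    have hyabs : |yv j| ≤ D := by
      have := hyvbd j
      rw [abs_of_nonneg this.1]
      exact this.2
    calc |δ j| ≤ |yv j| + |w j| := abs_add_le _ _
      _ ≤ D + (Bn k:ℤ)*((ZU k:ℤ)*(P:ℤ)) := add_le_add hyabs (hwbd j)
      _ ≤ (DU k:ℤ) * (P:ℤ) := by
          have hDUc : (DU k:ℤ) = (Bn k:ℤ)*(ZU k:ℤ) + (Dn k:ℤ) := by unfold DU; push_cast; ring
          rw [hDUc, hDdef]
          have hP1' : (1:ℤ) ≤ (P:ℤ) := by exact_mod_cast hP1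
          have hDn0 : (0:ℤ) ≤ (Dn k:ℤ) := Int.natCast_nonneg _
          have : (Dn k:ℤ) ≤ (Dn k:ℤ) * (P:ℤ) := le_mul_of_one_le_right hDn0 hP1'
          have hBZ : (Bn k:ℤ)*((ZU k:ℤ)*(P:ℤ)) = ((Bn k:ℤ)*(ZU k:ℤ))*(P:ℤ) := by ring
          rw [hBZ]
          have hgoal : ((Bn k:ℤ)*(ZU k:ℤ) + (Dn k:ℤ))*(P:ℤ)
              = ((Bn k:ℤ)*(ZU k:ℤ))*(P:ℤ) + (Dn k:ℤ)*(P:ℤ) := by ring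
          rw [hgoal]
          linarith
  -- A'
  set A' : Fin k → ℤ := fun j => ((C * cv j : ℕ) : ℤ) * (P:ℤ) + δ j with hA'def
  have hA'sum : ∑ j : Fin k, A' j * (ck k (n + (j:ℕ)):ℤ) = (N:ℤ) := by
    simp only [hA'def, add_mul]
    rw [Finset.sum_add_distrib, hδval]
    have hbase : ∑ j : Fin k, ((C * cv j:ℕ):ℤ) * (P:ℤ) * (ck k (n+(j:ℕ)):ℤ)
        = ((P * G * C : ℕ):ℤ) := by
      rw [hGdef]
      push_cast
      simp only [Finset.mul_sum, Finset.sum_mul]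
      apply Finset.sum_congr rfl
      intro j _
      ring
    rw [hbase]
    exact_mod_cast congrArg (Nat.cast : ℕ → ℤ) hNdec
  have hA'lb : ∀ j : Fin k, ((2^(n + (j:ℕ)) : ℕ) : ℤ) ≤ A' j := by
    intro j
    have h1 : (C:ℤ) ≤ ((C * cv j :ℕ):ℤ) := by
      have := Nat.le_mul_of_pos_right C (hcv j).1
      exact_mod_cast this
    have h2 : -((DU k:ℤ) * (P:ℤ)) ≤ δ j := (abs_le.1 (hδbd j)).1
    have h3 : ((2^(n+(j:ℕ)):ℕ):ℤ) ≤ ((2^k:ℕ):ℤ) * (P:ℤ) := by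
      have hn3 : 2^(n+(j:ℕ)) ≤ 2^k * P := by
        rw [hPdef, ← pow_add]
        apply Nat.pow_le_pow_right (by norm_num)
        have := j.isLt
        omega
      exact_mod_cast hn3
    have h4 : ((2^k + DU k + 1 : ℕ):ℤ) ≤ (C:ℤ) := Nat.cast_le.2 hClb
    have hP0 : (0:ℤ) ≤ (P:ℤ) := Int.natCast_nonneg _
    have h5 : ((2^k + DU k + 1:ℕ):ℤ) * (P:ℤ) ≤ ((C*cv j:ℕ):ℤ) * (P:ℤ) :=
      mul_le_mul_of_nonneg_right (le_trans h4 h1) hP0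
    have h6 : ((2^k + DU k + 1:ℕ):ℤ) * (P:ℤ) = ((2^k:ℕ):ℤ)*(P:ℤ) + (DU k:ℤ)*(P:ℤ) + (P:ℤ) := by
      push_cast
      ring
    rw [hA'def]
    simp only []
    linarith
  have hA'ub : ∀ j : Fin k, A' j ≤ ((TU k * P : ℕ) : ℤ) := by
    intro j
    have h1 : ((C * cv j:ℕ):ℤ) ≤ ((CU k * k:ℕ):ℤ) :=
      Nat.cast_le.2 (Nat.mul_le_mul hCub (hcv j).2)
    have h2 := (abs_le.1 (hδbd j)).2
    have hP0 : (0:ℤ) ≤ (P:ℤ) := Int.natCast_nonneg _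
    have h5 : ((C * cv j:ℕ):ℤ) * (P:ℤ) ≤ ((CU k * k:ℕ):ℤ) * (P:ℤ) :=
      mul_le_mul_of_nonneg_right h1 hP0
    have h6 : ((TU k * P:ℕ):ℤ) = ((CU k * k:ℕ):ℤ)*(P:ℤ) + (DU k:ℤ)*(P:ℤ) := by
      unfold TU
      push_cast
      ring
    rw [hA'def]
    simp only []
    linarith
  -- conclude
  refine ⟨fun j => (A' j).toNat, ?_, ?_⟩
  · intro j
    have hlb := hA'lb j
    have hub := hA'ub j
    have h0 : 0 ≤ A' j := le_trans (by positivity) hlb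
    constructor
    · have : ((2^(n + (j:ℕ)):ℕ):ℤ) ≤ ((A' j).toNat : ℤ) := by
        rw [Int.toNat_of_nonneg h0]; exact hlb
      exact_mod_cast this
    · have : ((A' j).toNat : ℤ) ≤ ((TU k * P:ℕ):ℤ) := by
        rw [Int.toNat_of_nonneg h0]; exact hub
      have := Nat.cast_le.1 this
      simpa [hPdef] using this
  · have hcast : ((∑ j : Fin k, (A' j).toNat * ck k (n + (j:ℕ)) : ℕ) : ℤ) = (N:ℤ) := by
      push_cast
      rw [← hA'sum]
      apply Finset.sum_congr rfl
      intro j _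
      have h0 : 0 ≤ A' j := le_trans (by positivity) (hA'lb j)
      rw [Int.toNat_of_nonneg h0]
    exact_mod_cast hcast

lemma msum_card {ι : Type*} (s : Finset ι) (f : ι → Multiset ℕ) :
    (∑ i ∈ s, f i).card = ∑ i ∈ s, (f i).card := by
  classical
  induction s using Finset.induction_on with
  | empty => simp
  | insert _ _ h ih => simp [Finset.sum_insert h, ih]

lemma msum_sum {ι : Type*} (s : Finset ι) (f : ι → Multiset ℕ) :
    (∑ i ∈ s, f i).sum = ∑ i ∈ s, (f i).sum := by
  classical
  induction s using Finset.induction_on with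
  | empty => simp
  | insert _ _ h ih => simp [Finset.sum_insert h, ih]

lemma msum_mem {ι : Type*} (s : Finset ι) (f : ι → Multiset ℕ) (x : ℕ)
    (hx : x ∈ ∑ i ∈ s, f i) : ∃ i ∈ s, x ∈ f i := by
  classical
  induction s using Finset.induction_on with
  | empty => simp at hx
  | insert _ _ h ih =>
    rename_i a t
    rw [Finset.sum_insert h, Multiset.mem_add] at hx
    rcases hx with hx | hx
    · exact ⟨a, Finset.mem_insert_self _ _, hx⟩
    · obtain ⟨i, hi, hxi⟩ := ih hx
      exact ⟨i, Finset.mem_insert_of_mem hi, hxi⟩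

lemma map_mul_sum (s : Multiset ℕ) (c : ℕ) : (s.map (fun a => a * c)).sum = s.sum * c := by
  induction s using Multiset.induction_on with
  | empty => simp
  | cons a t ih => simp [ih, add_mul]

/-- Waring's theorem for binary `k`'th powers: there exist a positive integer `W` and a
threshold `N₀` such that every `N ≥ N₀` that is a multiple of `E_k = gcd(2^k - 1, k)` is the
sum of at most `W` binary `k`'th powers. -/
theorem waring_binary_kth_powers (k : ℕ) (hk : 1 ≤ k) :
    ∃ W N₀ : ℕ, 0 < W ∧ ∀ N : ℕ, N₀ ≤ N → Nat.gcd (2 ^ k - 1) k ∣ N →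
      ∃ l : Multiset ℕ, l.card ≤ W ∧ (∀ x ∈ l, IsBinaryKthPower k x) ∧ l.sum = N := by
  by_cases hk1 : k = 1
  · subst hk1
    refine ⟨1, 1, by norm_num, ?_⟩
    intro N hN _
    refine ⟨{N}, by simp, ?_, by simp⟩
    intro x hx
    rw [Multiset.mem_singleton] at hx
    subst hx
    refine ⟨Nat.log 2 x + 1, x, by omega, ?_, ?_, ?_⟩
    · simpa using Nat.pow_log_le_self 2 (by omega)
    · exact Nat.lt_pow_succ_log_self (by norm_num) x
    · simp [ck]
  · obtain ⟨k', rfl⟩ : ∃ k', k = k' + 2 := ⟨k - 2, by omega⟩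
    set k := k' + 2 with hkdef
    refine ⟨2 * k * TU k + 1, beta k * 2^(k*k), by omega, ?_⟩
    intro N hN hE
    have hbpos : 0 < beta k := by
      have := Dn_pos k
      unfold beta GU
      positivity
    set l := Nat.log 2 (N / beta k) with hldef
    set m := l / (k*k) with hmdef
    have hNb : 2^(k*k) ≤ N / beta k := (Nat.le_div_iff_mul_le hbpos).2 (by linarith [hN])
    have hNbne : N / beta k ≠ 0 := by
      have : (0:ℕ) < 2^(k*k) := by positivity
      omega
    have hlkk : k*k ≤ l := by
      rw [hldef]
      exact (Nat.le_log_iff_pow_le (by norm_num) hNbne).2 hNb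
    have hm1 : 1 ≤ m := by
      rw [hmdef]
      exact (Nat.one_le_div_iff (by positivity)).2 hlkk
    have hlow : beta k * 2^(k*k*m) ≤ N := by
      have h1 : k*k*m ≤ l := by
        rw [hmdef, Nat.mul_comm (k*k) _]
        exact Nat.div_mul_le_self l (k*k)
      have h2 : 2^(k*k*m) ≤ 2^l := Nat.pow_le_pow_right (by norm_num) h1
      have h3 : 2^l ≤ N / beta k := Nat.pow_log_le_self 2 hNbne
      calc beta k * 2^(k*k*m) ≤ beta k * (N / beta k) :=
            Nat.mul_le_mul_left _ (le_trans h2 h3)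
        _ ≤ N := Nat.mul_div_le N (beta k)
    have hhigh : N < beta k * 2^(k*k) * 2^(k*k*m) := by
      have h1 : N / beta k < 2^(l+1) := Nat.lt_pow_succ_log_self (by norm_num) _
      have h2 : l + 1 ≤ k*k + k*k*m := by
        have hdm := Nat.div_add_mod l (k*k)
        rw [← hmdef] at hdm
        have hmod : l % (k*k) < k*k := Nat.mod_lt _ (by positivity)
        omega
      have h3 : N < beta k * 2^(l+1) := by
        have := Nat.div_add_mod N (beta k)
        have hmod : N % beta k < beta k := Nat.mod_lt _ hbpos
        calc N = beta k * (N / beta k) + N % beta k := (Nat.div_add_mod N (beta k)).symm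
          _ < beta k * (N / beta k) + beta k := by omega
          _ = beta k * (N / beta k + 1) := by ring
          _ ≤ beta k * 2^(l+1) := Nat.mul_le_mul_left _ (by omega)
      calc N < beta k * 2^(l+1) := h3
        _ ≤ beta k * 2^(k*k + k*k*m) := Nat.mul_le_mul_left _ (Nat.pow_le_pow_right (by norm_num) h2)
        _ = beta k * 2^(k*k) * 2^(k*k*m) := by rw [pow_add]; ring
    obtain ⟨A, hAbd, hAsum⟩ := main_repr k' m hm1 N hE hlow hhigh
    set n := k * m with hndef
    have hn1 : 1 ≤ n := by
      have : 2 * 1 ≤ k * m := Nat.mul_le_mul (by omega) hm1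
      omega
    have H : ∀ j : Fin k, ∃ lj : Multiset ℕ,
        (∀ a ∈ lj, 2^((n + (j:ℕ))-1) ≤ a ∧ a < 2^(n + (j:ℕ))) ∧ lj.sum = A j ∧
          lj.card * 2^((n + (j:ℕ))-1) ≤ A j := by
      intro j
      exact multiset_repr (n + (j:ℕ)) (by omega) (A j) (hAbd j).1
    choose ls hmem hsum hcard using H
    refine ⟨∑ j : Fin k, (ls j).map (fun a => a * ck k (n + (j:ℕ))), ?_, ?_, ?_⟩
    · rw [msum_card]
      have hcard1 : ∀ j : Fin k, ((ls j).map (fun a => a * ck k (n + (j:ℕ)))).card ≤ 2 * TU k := by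
        intro j
        rw [Multiset.card_map]
        have h1 := hcard j
        have h2 : A j ≤ TU k * 2^n := (hAbd j).2
        have h3 : (ls j).card * 2^(n-1) ≤ (ls j).card * 2^((n + (j:ℕ))-1) :=
          Nat.mul_le_mul_left _ (Nat.pow_le_pow_right (by norm_num) (by omega))
        have h4 : TU k * 2^n = (2 * TU k) * 2^(n-1) := by
          have h : 2^n = 2 * 2^(n-1) := by
            rw [← pow_succ']
            congr 1
            omega
          rw [h]
          ring
        have h5 : (ls j).card * 2^(n-1) ≤ (2 * TU k) * 2^(n-1) := by
          rw [← h4]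
          omega
        exact Nat.le_of_mul_le_mul_right h5 (by positivity)
      calc ∑ j : Fin k, ((ls j).map (fun a => a * ck k (n + (j:ℕ)))).card
          ≤ ∑ _j : Fin k, 2 * TU k := Finset.sum_le_sum (fun j _ => hcard1 j)
        _ = k * (2 * TU k) := by simp [Finset.sum_const, Finset.card_univ, mul_comm]
        _ ≤ 2 * k * TU k + 1 := by ring_nf; omega
    · intro x hx
      obtain ⟨j, _, hxj⟩ := msum_mem _ _ x hx
      rw [Multiset.mem_map] at hxj
      obtain ⟨a, ha, rfl⟩ := hxj
      exact ⟨n + (j:ℕ), a, by omega, (hmem j a ha).1, (hmem j a ha).2, rfl⟩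
    · rw [msum_sum]
      calc ∑ j : Fin k, ((ls j).map (fun a => a * ck k (n + (j:ℕ)))).sum
          = ∑ j : Fin k, A j * ck k (n + (j:ℕ)) := by
            apply Finset.sum_congr rfl
            intro j _
            rw [map_mul_sum, hsum]
        _ = N := hAsum
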